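/- Let A, B, x₀, P be as above with im Pᵀ = im R(A,[B x₀]), and let Q ⪰ 0, R ≻ 0 define the cost J(u) = ∫₀^∞ x(t)ᵀ Q x(t) + u(t)ᵀ R u(t) dt along solutions of ẋ = Ax + Bu, x(0) = x₀. Define Q̂ := (P†)ᵀ Q P† and the reduced cost Ĵ(u) = ∫₀^∞ ξ(t)ᵀ Q̂ ξ(t) + u(t)ᵀ R u(t) dt along ξ̇ = P A P† ξ + P B u, ξ(0) = P x₀. Then for every input u, J(u) = Ĵ(u). -/

import Mathlib

open Matrix MeasureTheory

/-- The reachable subspace `im R(A,[B x₀])`. -/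
def reachSpan {n m : ℕ} (A : Matrix (Fin n) (Fin n) ℝ) (B : Matrix (Fin n) (Fin m) ℝ)
    (x₀ : Fin n → ℝ) : Submodule ℝ (Fin n → ℝ) :=
  Submodule.span ℝ
    ({v | ∃ i < n, v = (A ^ i) *ᵥ x₀} ∪
     {v | ∃ i < n, ∃ j : Fin m, v = (A ^ i) *ᵥ (fun k => B k j)})

open Polynomial in
/-- Cayley–Hamilton: `A^n` applied to a vector is a combination of lower powers. -/
lemma pow_card_mulVec {n : ℕ} (A : Matrix (Fin n) (Fin n) ℝ) (w : Fin n → ℝ) :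
    (A ^ n) *ᵥ w =
      ∑ i ∈ Finset.range n, (-(A.charpoly.coeff i)) • ((A ^ i) *ᵥ w) := by
  rcases Nat.eq_zero_or_pos n with hn | hn
  · subst hn
    exact funext fun k => k.elim0
  · have h0 : (aeval A) A.charpoly = 0 := Matrix.aeval_self_charpoly A
    have hdeg : A.charpoly.natDegree = n := by
      simpa using A.charpoly_natDegree_eq_dim
    have hcn : A.charpoly.coeff n = 1 := by
      have := A.charpoly_monic.coeff_natDegree
      rwa [hdeg] at this
    rw [aeval_eq_sum_range, hdeg, Finset.sum_range_succ, hcn, one_smul] at h0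
    have hAn : A ^ n = ∑ i ∈ Finset.range n, (-(A.charpoly.coeff i)) • A ^ i := by
      have := eq_neg_of_add_eq_zero_right h0
      rw [this, ← Finset.sum_neg_distrib]
      simp [neg_smul]
    have hsum : ∀ (s : Finset ℕ) (c : ℕ → ℝ),
        (∑ i ∈ s, c i • A ^ i) *ᵥ w = ∑ i ∈ s, c i • ((A ^ i) *ᵥ w) := by
      intro s c
      rw [← Matrix.toLin'_apply, map_sum, LinearMap.sum_apply]
      simp [← Matrix.toLin'_pow, Matrix.toLin'_apply]
    rw [hAn, hsum]

lemma reachSpan_inv {n m : ℕ} (A : Matrix (Fin n) (Fin n) ℝ) (B : Matrix (Fin n) (Fin m) ℝ)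
    (x₀ : Fin n → ℝ) {v : Fin n → ℝ} (hv : v ∈ reachSpan A B x₀) :
    A *ᵥ v ∈ reachSpan A B x₀ := by
  induction hv using Submodule.span_induction with
  | mem v hv =>
    have step : ∀ (w : Fin n → ℝ), (∀ k < n, (A ^ k) *ᵥ w ∈ reachSpan A B x₀) →
        ∀ i < n, A *ᵥ ((A ^ i) *ᵥ w) ∈ reachSpan A B x₀ := by
      intro w hw i hi
      rw [Matrix.mulVec_mulVec, ← pow_succ']
      rcases lt_or_ge (i + 1) n with h1 | h1
      · exact hw _ h1
      · have : i + 1 = n := le_antisymm hi h1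
        rw [this, pow_card_mulVec]
        exact Submodule.sum_mem _ fun k hk =>
          Submodule.smul_mem _ _ (hw k (Finset.mem_range.mp hk))
    rcases hv with ⟨i, hi, rfl⟩ | ⟨i, hi, j, rfl⟩
    · exact step x₀ (fun k hk => Submodule.subset_span (Or.inl ⟨k, hk, rfl⟩)) i hi
    · exact step _ (fun k hk => Submodule.subset_span (Or.inr ⟨k, hk, j, rfl⟩)) i hi
  | zero => simpa using Submodule.zero_mem (reachSpan A B x₀)
  | add a b _ _ ha hb => rw [Matrix.mulVec_add]; exact Submodule.add_mem _ ha hb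
  | smul c a _ ha => rw [Matrix.mulVec_smul]; exact Submodule.smul_mem _ _ ha

/-- under the exact subspace condition `im Pᵀ = im R(A,[B x₀])`,
the full cost `J(u) = ∫₀^∞ xᵀQx + uᵀRu dt` equals the reduced cost
`Ĵ(u) = ∫₀^∞ ξᵀQ̂ξ + uᵀRu dt` with `Q̂ = (P†)ᵀQP†`, for every input `u`. -/
theorem stmt6 {n m nh : ℕ}
    (A : Matrix (Fin n) (Fin n) ℝ) (B : Matrix (Fin n) (Fin m) ℝ) (x₀ : Fin n → ℝ)
    (Q : Matrix (Fin n) (Fin n) ℝ) (R : Matrix (Fin m) (Fin m) ℝ)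
    (hQ : Q.PosSemidef) (hR : R.PosDef)
    (P : Matrix (Fin nh) (Fin n) ℝ) (Pdag : Matrix (Fin n) (Fin nh) ℝ)
    (hPP : P * Pdag = 1) (hsym : (Pdag * P)ᵀ = Pdag * P)
    (hrange : LinearMap.range (Pᵀ.mulVecLin) = reachSpan A B x₀)
    (u : ℝ → Fin m → ℝ)
    (x : ℝ → Fin n → ℝ) (ξ : ℝ → Fin nh → ℝ)
    (hx0 : x 0 = x₀)
    (hx : ∀ t : ℝ, HasDerivAt x (A *ᵥ x t + B *ᵥ u t) t)
    (hξ0 : ξ 0 = P *ᵥ x₀)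
    (hξ : ∀ t : ℝ, HasDerivAt ξ ((P * A * Pdag) *ᵥ ξ t + (P * B) *ᵥ u t) t) :
    ∫ t in Set.Ioi (0 : ℝ), ((x t) ⬝ᵥ (Q *ᵥ x t) + (u t) ⬝ᵥ (R *ᵥ u t)) =
    ∫ t in Set.Ioi (0 : ℝ),
      ((ξ t) ⬝ᵥ ((Pdagᵀ * Q * Pdag) *ᵥ ξ t) + (u t) ⬝ᵥ (R *ᵥ u t)) := by
  set V := reachSpan A B x₀ with hV
  set Pr : Matrix (Fin n) (Fin n) ℝ := Pdag * P with hPrdef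
  -- basic projector identities
  have hPrP : Pr * Pᵀ = Pᵀ := by
    have h1 : P * Pr = P := by rw [hPrdef, ← Matrix.mul_assoc, hPP, Matrix.one_mul]
    have h2 := congrArg Matrix.transpose h1
    rw [Matrix.transpose_mul, hsym] at h2
    exact h2
  have hPrPdag : Pr * Pdag = Pdag := by
    rw [hPrdef, Matrix.mul_assoc, hPP, Matrix.mul_one]
  have hPrT : Pr = Pᵀ * Pdagᵀ := by rw [← Matrix.transpose_mul, hsym]
  -- Pr fixes V
  have hfix : ∀ v ∈ V, Pr *ᵥ v = v := by
    intro v hv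
    rw [← hrange] at hv
    obtain ⟨z, hz⟩ := hv
    rw [← hz]
    simp only [Matrix.mulVecLin_apply, Matrix.mulVec_mulVec, hPrP]
  -- image of Pdag is inside V
  have hmemPdag : ∀ z : Fin nh → ℝ, Pdag *ᵥ z ∈ V := by
    intro z
    have : Pdag *ᵥ z = Pᵀ *ᵥ ((Pdagᵀ * Pdag) *ᵥ z) := by
      rw [Matrix.mulVec_mulVec, ← Matrix.mul_assoc, ← hPrT, hPrPdag]
    rw [this, ← hrange]
    exact ⟨(Pdagᵀ * Pdag) *ᵥ z, rfl⟩
  -- x₀ and columns of B belong to V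
  have hx₀V : x₀ ∈ V := by
    rcases Nat.eq_zero_or_pos n with hn | hn
    · have : x₀ = 0 := funext fun k => (hn ▸ k).elim0
      rw [this]; exact Submodule.zero_mem _
    · have : x₀ = (A ^ 0) *ᵥ x₀ := by simp
      rw [this]
      exact Submodule.subset_span (Or.inl ⟨0, hn, rfl⟩)
  have hBV : ∀ w : Fin m → ℝ, B *ᵥ w ∈ V := by
    intro w
    have hcol : ∀ j : Fin m, (fun k => B k j) ∈ V := by
      intro j
      rcases Nat.eq_zero_or_pos n with hn | hn
      · have : (fun k => B k j) = (0 : Fin n → ℝ) := funext fun k => (hn ▸ k).elim0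
        rw [this]; exact Submodule.zero_mem _
      · have : (fun k => B k j) = (A ^ 0) *ᵥ (fun k => B k j) := by simp
        rw [this]
        exact Submodule.subset_span (Or.inr ⟨0, hn, j, rfl⟩)
    have : B *ᵥ w = ∑ j : Fin m, w j • (fun k => B k j) := by
      ext k
      simp [Matrix.mulVec, dotProduct, Finset.sum_apply, mul_comm]
    rw [this]
    exact Submodule.sum_mem _ fun j _ => Submodule.smul_mem _ _ (hcol j)
  -- the lifted reduced trajectory
  set y : ℝ → Fin n → ℝ := fun t => Pdag *ᵥ ξ t with hy
  have hyV : ∀ t, y t ∈ V := fun t => hmemPdag (ξ t)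
  have hy' : ∀ t : ℝ, HasDerivAt y (A *ᵥ y t + B *ᵥ u t) t := by
    intro t
    have L := (Matrix.mulVecLin Pdag).toContinuousLinearMap
    have hcomp :
        HasDerivAt y (Pdag *ᵥ ((P * A * Pdag) *ᵥ ξ t + (P * B) *ᵥ u t)) t := by
      have := ((Matrix.mulVecLin Pdag).toContinuousLinearMap.hasFDerivAt
        (x := ξ t)).comp_hasDerivAt t (hξ t)
      exact this
    have heq : Pdag *ᵥ ((P * A * Pdag) *ᵥ ξ t + (P * B) *ᵥ u t)
        = A *ᵥ y t + B *ᵥ u t := by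
      rw [Matrix.mulVec_add, Matrix.mulVec_mulVec, Matrix.mulVec_mulVec]
      have h1 : Pdag * (P * A * Pdag) = Pr * A * Pdag := by
        simp only [hPrdef, Matrix.mul_assoc]
      have h2 : Pdag * (P * B) = Pr * B := by rw [hPrdef, Matrix.mul_assoc]
      rw [h1, h2]
      have e1 : (Pr * A * Pdag) *ᵥ ξ t = A *ᵥ y t := by
        rw [Matrix.mul_assoc, ← Matrix.mulVec_mulVec, ← Matrix.mulVec_mulVec (ξ t) A Pdag]
        exact hfix _ (reachSpan_inv A B x₀ (hyV t))
      have e2 : (Pr * B) *ᵥ u t = B *ᵥ u t := by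
        rw [← Matrix.mulVec_mulVec]
        exact hfix _ (hBV (u t))
      rw [e1, e2]
    rwa [heq] at hcomp
  have hy0 : y 0 = x₀ := by
    rw [hy]
    simp only [hξ0, Matrix.mulVec_mulVec, ← hPrdef]
    exact hfix x₀ hx₀V
  -- uniqueness of ODE solutions: x = y on [0, ∞)
  have hxy : ∀ t : ℝ, 0 ≤ t → x t = y t := by
    intro t ht
    set L := (Matrix.mulVecLin A).toContinuousLinearMap with hL
    have hv : ∀ s : ℝ, LipschitzWith (‖L‖₊ + 0) (fun z => A *ᵥ z + B *ᵥ u s) := by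
      intro s
      have := L.lipschitz.add (LipschitzWith.const (B *ᵥ u s))
      simpa [Pi.add_def, hL] using this
    have := ODE_solution_unique (v := fun s z => A *ᵥ z + B *ᵥ u s) hv
      (f := x) (g := y) (a := 0) (b := t)
      (fun s _ => (hx s).continuousAt.continuousWithinAt)
      (fun s _ => (hx s).hasDerivWithinAt)
      (fun s _ => (hy' s).continuousAt.continuousWithinAt)
      (fun s _ => (hy' s).hasDerivWithinAt)
      (by rw [hx0, hy0])
    exact this ⟨ht, le_refl t⟩
  -- conclude equality of integrands on Ioi 0
  refine setIntegral_congr_fun measurableSet_Ioi ?_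
  intro t ht
  have hxt : x t = Pdag *ᵥ ξ t := hxy t (le_of_lt ht)
  simp only [hxt]
  congr 1
  rw [Matrix.mul_assoc, ← Matrix.mulVec_mulVec (ξ t) Pdagᵀ (Q * Pdag),
    Matrix.dotProduct_mulVec (ξ t) Pdagᵀ, Matrix.vecMul_transpose,
    ← Matrix.mulVec_mulVec (ξ t) Q Pdag]
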